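/- arXiv:1703.02797 — 2 statements merged into one kernel-verified Lean document; each statement's English description precedes it below -/
import Mathlib

section
/- If R is a non-negative complex symplectic transformation (symplectic and i(σ(conj(RX), RX) - σ(conj(X), X)) ≥ 0 for all X ∈ ℂ^{2n}) with R + I invertible, then for all X ∈ ℂ^{2n}, Re(iσ(conj(X), (R - I)(R + I)^{-1}X)) ≥ 0. -/
open Matrix
open scoped ComplexOrder

/-- The standard symplectic matrix `[[0, Iₙ], [-Iₙ, 0]]`. -/
noncomputable def sympMat (n : ℕ) : Matrix (Fin n ⊕ Fin n) (Fin n ⊕ Fin n) ℂ :=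
  Matrix.fromBlocks 0 1 (-1) 0

/-- The standard symplectic bilinear form `σ((x,ξ),(y,η)) = ⟨ξ,y⟩ - ⟨x,η⟩` on `ℂ^{2n}`. -/
noncomputable def sympForm (n : ℕ) (X Y : Fin n ⊕ Fin n → ℂ) : ℂ :=
  (sympMat n *ᵥ X) ⬝ᵥ Y


lemma sympMat_transpose (n : ℕ) : (sympMat n)ᵀ = - sympMat n := by
  ext i j
  cases i <;> cases j <;> simp [sympMat, Matrix.one_apply, eq_comm]

lemma sympMat_conjTranspose (n : ℕ) : (sympMat n)ᴴ = - sympMat n := by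
  ext i j
  cases i <;> cases j <;> simp [sympMat, Matrix.one_apply, eq_comm, apply_ite]

lemma symp_anti (n : ℕ) (u v : Fin n ⊕ Fin n → ℂ) : sympForm n u v = - sympForm n v u := by
  unfold sympForm
  rw [dotProduct_comm, dotProduct_mulVec, ← mulVec_transpose, sympMat_transpose, neg_mulVec,
    neg_dotProduct]

lemma symp_conj (n : ℕ) (u v : Fin n ⊕ Fin n → ℂ) :
    star (sympForm n u v) = sympForm n (star u) (star v) := by
  unfold sympForm
  rw [← star_dotProduct_star, dotProduct_comm, star_mulVec, sympMat_conjTranspose,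
    vecMul_neg, ← mulVec_transpose, sympMat_transpose, neg_mulVec, neg_neg]

/-- If `R` is a non-negative complex symplectic transformation with `R + I` invertible, then
for all `X ∈ ℂ^{2n}`, `Re(iσ(conj X, (R - I)(R + I)⁻¹ X)) ≥ 0`. -/
theorem cayley_re_nonneg (n : ℕ)
    (R : Matrix (Fin n ⊕ Fin n) (Fin n ⊕ Fin n) ℂ)
    (hsymp : ∀ X Y : Fin n ⊕ Fin n → ℂ, sympForm n (R *ᵥ X) (R *ᵥ Y) = sympForm n X Y)
    (hnonneg : ∀ X : Fin n ⊕ Fin n → ℂ,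
      0 ≤ Complex.I * (sympForm n (star (R *ᵥ X)) (R *ᵥ X) - sympForm n (star X) X))
    (h : IsUnit (R + 1).det) :
    ∀ X : Fin n ⊕ Fin n → ℂ,
      0 ≤ (Complex.I * sympForm n (star X) (((R - 1) * (R + 1)⁻¹) *ᵥ X)).re := by
  intro X
  set Y := (R + 1)⁻¹ *ᵥ X with hY
  have hX : (R + 1) *ᵥ Y = X := by
    rw [hY, mulVec_mulVec, Matrix.mul_nonsing_inv _ h, one_mulVec]
  have hRY : ((R - 1) * (R + 1)⁻¹) *ᵥ X = (R - 1) *ᵥ Y := by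
    rw [hY, mulVec_mulVec]
  rw [hRY, ← hX]
  have hstar : star ((R + 1) *ᵥ Y) = star (R *ᵥ Y) + star Y := by
    simp [add_mulVec]
  have hsub : (R - 1) *ᵥ Y = R *ᵥ Y - Y := by
    simp [sub_mulVec]
  rw [hstar, hsub]
  set z1 := sympForm n (star (R *ᵥ Y)) (R *ᵥ Y) with hz1
  set z2 := sympForm n (star Y) Y with hz2
  set z := sympForm n (star Y) (R *ᵥ Y) with hz
  have hbil : sympForm n (star (R *ᵥ Y) + star Y) (R *ᵥ Y - Y)
      = (z1 - z2) + (z - sympForm n (star (R *ᵥ Y)) Y) := by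
    simp only [hz1, hz2, hz, sympForm, mulVec_add, add_dotProduct, dotProduct_sub]
    ring
  have hcross : sympForm n (star (R *ᵥ Y)) Y = - star z := by
    rw [symp_anti, hz, symp_conj, star_star]
  rw [hbil, hcross]
  have h1 := hnonneg Y
  rw [Complex.le_def] at h1
  have him : (z + star z).im = 0 := by
    simp [Complex.add_im, Complex.star_def]
  have heq : z - -star z = z + star z := by ring
  rw [heq, mul_add, Complex.add_re]
  have h2 : (Complex.I * (z + star z)).re = 0 := by
    rw [Complex.mul_re]
    simp [him]
  rw [h2, add_zero]
  simpa using h1.1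
end

section
/- If T : ℂ^{2n} → ℂ^{2n} is a non-negative complex symplectic linear transformation, then its inverse of conjugate, conj(T)^{-1}, is also a non-negative complex symplectic linear transformation. -/
open Matrix
open scoped ComplexOrder

lemma star_sympMat (n : ℕ) (i j : Fin n ⊕ Fin n) : star (sympMat n i j) = sympMat n i j := by
  rcases i with i | i <;> rcases j with j | j <;>
    simp [sympMat, fromBlocks, one_apply, apply_ite star]

lemma sympForm_star (n : ℕ) (X Y : Fin n ⊕ Fin n → ℂ) :
    sympForm n (star X) (star Y) = star (sympForm n X Y) := by
  simp [sympForm, dotProduct, mulVec, star_sum, star_mul', star_sympMat]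

lemma map_star_mulVec (n : ℕ) (T : Matrix (Fin n ⊕ Fin n) (Fin n ⊕ Fin n) ℂ)
    (X : Fin n ⊕ Fin n → ℂ) :
    (T.map (starRingEnd ℂ)) *ᵥ (star X) = star (T *ᵥ X) := by
  funext j
  simp [mulVec, dotProduct, star_sum, map_apply]

lemma sympForm_antisymm (n : ℕ) (X Y : Fin n ⊕ Fin n → ℂ) :
    sympForm n X Y = - sympForm n Y X := by
  have ht : (sympMat n)ᵀ = - sympMat n := by
    ext i j
    rcases i with i | i <;> rcases j with j | j <;> simp [sympMat, fromBlocks, one_apply, eq_comm]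
  rw [sympForm, sympForm, dotProduct_comm, dotProduct_mulVec, ← mulVec_transpose, ht,
    neg_mulVec, neg_dotProduct]


/-- If `T` is a non-negative complex symplectic linear transformation, then so is
`conj(T)⁻¹`, the inverse of its entrywise conjugate. -/
theorem conj_inv_nonneg_symplectic (n : ℕ)
    (T : Matrix (Fin n ⊕ Fin n) (Fin n ⊕ Fin n) ℂ)
    (hTunit : IsUnit T.det)
    (hTsymp : ∀ X Y : Fin n ⊕ Fin n → ℂ, sympForm n (T *ᵥ X) (T *ᵥ Y) = sympForm n X Y)
    (hTnonneg : ∀ X : Fin n ⊕ Fin n → ℂ,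
      0 ≤ Complex.I * (sympForm n (star (T *ᵥ X)) (T *ᵥ X) - sympForm n (star X) X)) :
    IsUnit ((T.map (starRingEnd ℂ))⁻¹).det ∧
    (∀ X Y : Fin n ⊕ Fin n → ℂ,
      sympForm n ((T.map (starRingEnd ℂ))⁻¹ *ᵥ X) ((T.map (starRingEnd ℂ))⁻¹ *ᵥ Y)
        = sympForm n X Y) ∧
    (∀ X : Fin n ⊕ Fin n → ℂ,
      0 ≤ Complex.I * (sympForm n (star ((T.map (starRingEnd ℂ))⁻¹ *ᵥ X))
            ((T.map (starRingEnd ℂ))⁻¹ *ᵥ X) - sympForm n (star X) X)) := by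
  set S := T.map (starRingEnd ℂ) with hS
  have hSdet : IsUnit S.det := by
    rw [hS, ← RingHom.mapMatrix_apply, ← RingHom.map_det]
    exact hTunit.map (starRingEnd ℂ)
  have hSmul : ∀ X : Fin n ⊕ Fin n → ℂ, S *ᵥ (S⁻¹ *ᵥ X) = X := by
    intro X
    rw [mulVec_mulVec, mul_nonsing_inv _ hSdet, one_mulVec]
  have hSsymp : ∀ X Y : Fin n ⊕ Fin n → ℂ, sympForm n (S *ᵥ X) (S *ᵥ Y) = sympForm n X Y := by
    intro X Y
    have h1 : S *ᵥ X = star (T *ᵥ star X) := by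
      rw [← map_star_mulVec, star_star]
    have h2 : S *ᵥ Y = star (T *ᵥ star Y) := by
      rw [← map_star_mulVec, star_star]
    rw [h1, h2, sympForm_star, hTsymp, sympForm_star, star_star]
  refine ⟨?_, ?_, ?_⟩
  · rw [det_nonsing_inv]
    exact hSdet.ringInverse
  · intro X Y
    rw [← hSsymp (S⁻¹ *ᵥ X) (S⁻¹ *ᵥ Y), hSmul, hSmul]
  · intro X
    set Y := S⁻¹ *ᵥ X with hY
    have hTZ : T *ᵥ star Y = star X := by
      have h1 : S *ᵥ Y = X := hSmul X
      have h2 := map_star_mulVec n T (star Y)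
      rw [star_star, ← hS] at h2
      rw [← star_star (T *ᵥ star Y), ← h2, h1]
    have h := hTnonneg (star Y)
    rw [hTZ, star_star, star_star] at h
    rw [sympForm_antisymm n X (star X), sympForm_antisymm n Y (star Y)] at h
    have e : Complex.I * (sympForm n (star Y) Y - sympForm n (star X) X)
        = Complex.I * (-sympForm n (star X) X - -sympForm n (star Y) Y) := by ring
    rw [e]
    exact h
end
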